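/- arXiv:2207.10370 — 3 statements merged into one kernel-verified Lean document; each statement's English description precedes it below -/
import Mathlib

section
/- For all real numbers t < T, x, k and all σ > 0, the Black–Scholes price is the expectation of the call payoff under a lognormal with total variance σ²(T−t): ∫_ℝ max(e^{x + σ√(T−t)·z − σ²(T−t)/2} − e^k, 0) dγ(z) = BS(t,T,x,k,σ), where γ is the standard Gaussian measure on ℝ. -/
noncomputable section

/-- Standard normal density. -/
def phi (z : ℝ) : ℝ := (Real.sqrt (2 * Real.pi))⁻¹ * Real.exp (-z ^ 2 / 2)

/-- Standard normal cumulative distribution function. -/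
def N (y : ℝ) : ℝ := ∫ z in Set.Iic y, phi z

/-- Black–Scholes auxiliary quantity `d₁`. -/
def d1 (t T x k σ : ℝ) : ℝ :=
  (x - k) / (σ * Real.sqrt (T - t)) + σ * Real.sqrt (T - t) / 2

/-- Black–Scholes auxiliary quantity `d₂`. -/
def d2 (t T x k σ : ℝ) : ℝ :=
  (x - k) / (σ * Real.sqrt (T - t)) - σ * Real.sqrt (T - t) / 2

/-- Black–Scholes call price with log-spot `x`, log-strike `k`,
time to maturity `T - t` and volatility `σ`. -/
def BS (t T x k σ : ℝ) : ℝ :=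
  Real.exp x * N (d1 t T x k σ) - Real.exp k * N (d2 t T x k σ)

open MeasureTheory Set ProbabilityTheory

lemma phi_eq_pdf (z : ℝ) : phi z = gaussianPDFReal 0 1 z := by
  simp [phi, gaussianPDFReal, neg_div]

lemma phi_integrable : Integrable phi := by
  exact (integrable_gaussianPDFReal 0 1).congr
    (Filter.Eventually.of_forall fun z => (phi_eq_pdf z).symm)

lemma phi_sub_integrable (s : ℝ) : Integrable (fun z => phi (z - s)) := by
  refine (integrable_gaussianPDFReal s 1).congr (Filter.Eventually.of_forall fun z => ?_)
  simp [phi, gaussianPDFReal, neg_div]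

lemma integral_Ioi_comp_add (f : ℝ → ℝ) (a c : ℝ) :
    ∫ z in Ioi a, f (z + c) = ∫ z in Ioi (a + c), f z := by
  have A : MeasurableEmbedding fun x : ℝ => x + c :=
    (Homeomorph.addRight c).isClosedEmbedding.measurableEmbedding
  have h := A.setIntegral_map (μ := volume) f (Ioi (a + c))
  rw [map_add_right_eq_self volume c] at h
  have hset : (fun x : ℝ => x + c) ⁻¹' Ioi (a + c) = Ioi a := by
    ext y; simp [mem_Ioi]
  rw [hset] at h
  exact h.symm

lemma integral_Ioi_phi (b : ℝ) : ∫ z in Ioi b, phi z = N (-b) := by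
  have h := integral_comp_neg_Iic (-b) phi
  simp only [neg_neg] at h
  rw [N, ← h]
  refine setIntegral_congr_fun measurableSet_Iic fun z _ => ?_
  simp [phi]

theorem bs_price_as_gaussian_expectation (t T x k σ : ℝ) (htT : t < T) (hσ : 0 < σ) :
    ∫ z, max (Real.exp (x + σ * Real.sqrt (T - t) * z - σ ^ 2 * (T - t) / 2) - Real.exp k) 0
        ∂(ProbabilityTheory.gaussianReal 0 1) = BS t T x k σ := by
  have hTt : (0:ℝ) < T - t := sub_pos.mpr htT
  set s : ℝ := σ * Real.sqrt (T - t) with hs_def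
  have hs : 0 < s := mul_pos hσ (Real.sqrt_pos.mpr hTt)
  have hs2 : s ^ 2 = σ ^ 2 * (T - t) := by
    rw [hs_def, mul_pow, Real.sq_sqrt hTt.le]
  set A : ℝ := d2 t T x k σ with hA_def
  have hA : s * A = x - k - s ^ 2 / 2 := by
    rw [hA_def, d2, ← hs_def]
    field_simp
  have hd1 : d1 t T x k σ = A + s := by
    rw [hA_def, d1, d2, ← hs_def]; ring
  -- Step 1: express the Gaussian integral as a Lebesgue integral against the density
  have hdens : gaussianPDF 0 1
      = fun z => ((gaussianPDFReal 0 1 z).toNNReal : ENNReal) := rfl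
  rw [gaussianReal_of_var_ne_zero 0 one_ne_zero, hdens,
    integral_withDensity_eq_integral_smul ((measurable_gaussianPDFReal 0 1).real_toNNReal) _]
  have hpdf : ∀ z : ℝ, ((gaussianPDFReal 0 1 z).toNNReal : ℝ) = phi z := fun z => by
    rw [Real.coe_toNNReal _ (gaussianPDFReal_nonneg 0 1 z), phi_eq_pdf]
  have hstep1 : ∀ z : ℝ,
      (gaussianPDFReal 0 1 z).toNNReal •
        max (Real.exp (x + σ * Real.sqrt (T - t) * z - σ ^ 2 * (T - t) / 2) - Real.exp k) 0
      = (Ioi (-A)).indicator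
          (fun z => phi z * (Real.exp (x + s * z - σ ^ 2 * (T - t) / 2) - Real.exp k)) z := by
    intro z
    rw [NNReal.smul_def, smul_eq_mul, hpdf z, ← hs_def]
    have hexpo : x + s * z - σ ^ 2 * (T - t) / 2 - k = s * (z + A) := by
      rw [← hs2]; nlinarith [hA]
    by_cases hz : z ∈ Ioi (-A)
    · rw [indicator_of_mem hz]
      congr 1
      rw [max_eq_left]
      have : (0:ℝ) < s * (z + A) := mul_pos hs (by have := mem_Ioi.mp hz; linarith)
      have hk : k < x + s * z - σ ^ 2 * (T - t) / 2 := by linarith [hexpo ▸ this]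
      exact sub_nonneg.mpr (Real.exp_le_exp.mpr hk.le)
    · rw [indicator_of_notMem hz]
      have hz' : z + A ≤ 0 := by have := mem_Ioi.not.mp hz; simp only [mem_Ioi, not_lt] at this ⊢; linarith
      have : s * (z + A) ≤ 0 := mul_nonpos_of_nonneg_of_nonpos hs.le hz'
      have hk : x + s * z - σ ^ 2 * (T - t) / 2 ≤ k := by linarith [hexpo ▸ this]
      rw [max_eq_right (sub_nonpos.mpr (Real.exp_le_exp.mpr hk)), mul_zero]
  rw [integral_congr_ae (Filter.Eventually.of_forall hstep1),
    integral_indicator measurableSet_Ioi]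
  -- Step 2: split the integral
  have hmul : ∀ z : ℝ, phi z * Real.exp (x + s * z - σ ^ 2 * (T - t) / 2)
      = Real.exp x * phi (z - s) := by
    intro z
    have hexp : Real.exp (-z ^ 2 / 2) * Real.exp (x + s * z - σ ^ 2 * (T - t) / 2)
        = Real.exp x * Real.exp (-(z - s) ^ 2 / 2) := by
      rw [← Real.exp_add, ← Real.exp_add]
      congr 1
      rw [← hs2]; ring
    simp only [phi]
    rw [mul_assoc, hexp]; ring
  have hInt1 : IntegrableOn
      (fun z => phi z * Real.exp (x + s * z - σ ^ 2 * (T - t) / 2)) (Ioi (-A)) := by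
    refine Integrable.integrableOn ?_
    refine (((phi_sub_integrable s).const_mul (Real.exp x)).congr
      (Filter.Eventually.of_forall fun z => ?_))
    exact (hmul z).symm
  have hInt2 : IntegrableOn (fun z => phi z * Real.exp k) (Ioi (-A)) :=
    (phi_integrable.mul_const _).integrableOn
  have hsplit : ∫ z in Ioi (-A),
      phi z * (Real.exp (x + s * z - σ ^ 2 * (T - t) / 2) - Real.exp k)
      = (∫ z in Ioi (-A), phi z * Real.exp (x + s * z - σ ^ 2 * (T - t) / 2))
        - ∫ z in Ioi (-A), phi z * Real.exp k := by
    rw [← integral_sub hInt1 hInt2]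
    exact setIntegral_congr_fun measurableSet_Ioi fun z _ => by ring
  rw [hsplit]
  -- Step 3: compute the two integrals
  have hI1 : ∫ z in Ioi (-A), phi z * Real.exp (x + s * z - σ ^ 2 * (T - t) / 2)
      = Real.exp x * N (A + s) := by
    rw [setIntegral_congr_fun measurableSet_Ioi fun z _ => hmul z,
      integral_const_mul]
    congr 1
    have := integral_Ioi_comp_add phi (-A) (-s)
    simp only [← sub_eq_add_neg] at this
    rw [this, integral_Ioi_phi]
    congr 1
    ring
  have hI2 : ∫ z in Ioi (-A), phi z * Real.exp k = Real.exp k * N A := by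
    rw [setIntegral_congr_fun measurableSet_Ioi
        (fun z _ => by rw [mul_comm] : ∀ z ∈ Ioi (-A),
          phi z * Real.exp k = Real.exp k * phi z),
      integral_const_mul, integral_Ioi_phi, neg_neg]
  rw [hI1, hI2, BS, hd1, hA_def]
end
end

section
/- (Black–Scholes PDE.) For all real numbers t < T, x, k and all σ > 0, ∂BS/∂t(t,T,x,k,σ) + (σ²/2)·∂²BS/∂x²(t,T,x,k,σ) − (σ²/2)·∂BS/∂x(t,T,x,k,σ) = 0. -/
noncomputable section

lemma continuous_phi : Continuous phi := by
  unfold phi; continuity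

lemma integrable_phi : MeasureTheory.Integrable phi := by
  have h := (integrable_exp_neg_mul_sq (by norm_num : (0:ℝ) < 1/2)).const_mul
      (Real.sqrt (2 * Real.pi))⁻¹
  have heq : phi = fun z => (Real.sqrt (2 * Real.pi))⁻¹ * Real.exp (-(1/2) * z ^ 2) := by
    funext z; unfold phi; ring_nf
  rw [heq]; exact h

lemma hasDerivAt_phi (z : ℝ) : HasDerivAt phi (-z * phi z) z := by
  have h1 : HasDerivAt (fun z : ℝ => -z ^ 2 / 2) (-z) z := by
    have := ((hasDerivAt_pow 2 z).neg).div_const 2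
    exact this.congr_deriv (by push_cast; ring)
  have h2 := (h1.exp).const_mul (Real.sqrt (2 * Real.pi))⁻¹
  unfold phi
  refine h2.congr_deriv ?_
  ring

lemma hasDerivAt_N (y : ℝ) : HasDerivAt N (phi y) y := by
  have hint := integrable_phi
  have heq : N = fun z => (∫ u in Set.Iic (0:ℝ), phi u) + ∫ u in (0:ℝ)..z, phi u := by
    funext z
    rw [← intervalIntegral.integral_Iic_sub_Iic hint.integrableOn hint.integrableOn]
    unfold N; ring
  rw [heq]
  exact ((intervalIntegral.integral_hasDerivAt_right (hint.intervalIntegrable)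
    (continuous_phi.stronglyMeasurableAtFilter _ _) continuous_phi.continuousAt)).const_add _

theorem bs_pde (t T x k σ : ℝ) (htT : t < T) (hσ : 0 < σ) :
    deriv (fun s => BS s T x k σ) t
      + σ ^ 2 / 2 * iteratedDeriv 2 (fun y => BS t T y k σ) x
      - σ ^ 2 / 2 * deriv (fun y => BS t T y k σ) x = 0 := by
  have hTt : (0:ℝ) < T - t := sub_pos.2 htT
  have hrt : 0 < Real.sqrt (T - t) := Real.sqrt_pos.2 hTt
  set rt := Real.sqrt (T - t) with hrtdef
  have hσ0 : σ ≠ 0 := hσ.ne'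
  have hrt0 : rt ≠ 0 := hrt.ne'
  have hc : σ * rt ≠ 0 := mul_ne_zero hσ0 hrt0
  -- x-derivatives of d1, d2
  have hd1x : ∀ y : ℝ, HasDerivAt (fun y => d1 t T y k σ) (1 / (σ * rt)) y := by
    intro y
    have h := (((hasDerivAt_id y).sub_const k).div_const (σ * rt)).add_const (σ * rt / 2)
    simpa [d1, ← hrtdef] using h
  have hd2x : ∀ y : ℝ, HasDerivAt (fun y => d2 t T y k σ) (1 / (σ * rt)) y := by
    intro y
    have h := (((hasDerivAt_id y).sub_const k).div_const (σ * rt)).sub_const (σ * rt / 2)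
    simpa [d2, ← hrtdef] using h
  -- t-derivatives
  have hsq : HasDerivAt (fun s => Real.sqrt (T - s)) (-(1 / (2 * rt))) t := by
    have h1 : HasDerivAt (fun s : ℝ => T - s) (-1) t := by
      simpa using (hasDerivAt_id t).const_sub T
    have h2 := (Real.hasDerivAt_sqrt hTt.ne').comp t h1
    refine h2.congr_deriv ?_
    rw [← hrtdef]; ring
  have hinv := ((hsq.const_mul σ).inv (by rw [← hrtdef]; exact hc))
  have ha := hinv.const_mul (x - k)
  have hb := (hsq.const_mul σ).div_const 2
  have hd1t : HasDerivAt (fun s => d1 s T x k σ)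
      ((x - k) / (2 * σ * rt ^ 3) - σ / (4 * rt)) t := by
    have h := ha.add hb
    have heq : (fun s => d1 s T x k σ)
        = fun s => (x - k) * (σ * Real.sqrt (T - s))⁻¹ + σ * Real.sqrt (T - s) / 2 := by
      funext s; rw [d1, div_eq_mul_inv]
    rw [heq]
    refine h.congr_deriv ?_
    rw [← hrtdef]
    field_simp
    ring
  have hd2t : HasDerivAt (fun s => d2 s T x k σ)
      ((x - k) / (2 * σ * rt ^ 3) + σ / (4 * rt)) t := by
    have h := ha.sub hb
    have heq : (fun s => d2 s T x k σ)
        = fun s => (x - k) * (σ * Real.sqrt (T - s))⁻¹ - σ * Real.sqrt (T - s) / 2 := by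
      funext s; rw [d2, div_eq_mul_inv]
    rw [heq]
    refine h.congr_deriv ?_
    rw [← hrtdef]
    field_simp
    ring
  -- time derivative of BS
  have hBSt : HasDerivAt (fun s => BS s T x k σ)
      (Real.exp x * (phi (d1 t T x k σ) * ((x - k) / (2 * σ * rt ^ 3) - σ / (4 * rt)))
        - Real.exp k * (phi (d2 t T x k σ) * ((x - k) / (2 * σ * rt ^ 3) + σ / (4 * rt)))) t := by
    have h1 := ((hasDerivAt_N _).comp t hd1t).const_mul (Real.exp x)
    have h2 := ((hasDerivAt_N _).comp t hd2t).const_mul (Real.exp k)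
    have h := h1.sub h2
    exact h
  -- x-derivative of BS
  have hBSx : ∀ y : ℝ, HasDerivAt (fun y => BS t T y k σ)
      (Real.exp y * N (d1 t T y k σ) + Real.exp y * (phi (d1 t T y k σ) * (1 / (σ * rt)))
        - Real.exp k * (phi (d2 t T y k σ) * (1 / (σ * rt)))) y := by
    intro y
    have h1 := (Real.hasDerivAt_exp y).mul ((hasDerivAt_N _).comp y (hd1x y))
    have h2 := ((hasDerivAt_N _).comp y (hd2x y)).const_mul (Real.exp k)
    have h := h1.sub h2
    exact h
  have hderiv1 : deriv (fun y => BS t T y k σ)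
      = fun y => Real.exp y * N (d1 t T y k σ)
          + Real.exp y * (phi (d1 t T y k σ) * (1 / (σ * rt)))
          - Real.exp k * (phi (d2 t T y k σ) * (1 / (σ * rt))) :=
    funext fun y => (hBSx y).deriv
  -- second x-derivative
  have hFx : HasDerivAt (fun y => Real.exp y * N (d1 t T y k σ)
          + Real.exp y * (phi (d1 t T y k σ) * (1 / (σ * rt)))
          - Real.exp k * (phi (d2 t T y k σ) * (1 / (σ * rt))))
      ((Real.exp x * N (d1 t T x k σ)
          + Real.exp x * (phi (d1 t T x k σ) * (1 / (σ * rt))))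
        + (Real.exp x * (phi (d1 t T x k σ) * (1 / (σ * rt)))
          + Real.exp x * ((-(d1 t T x k σ) * phi (d1 t T x k σ) * (1 / (σ * rt))) * (1 / (σ * rt))))
        - Real.exp k * ((-(d2 t T x k σ) * phi (d2 t T x k σ) * (1 / (σ * rt))) * (1 / (σ * rt)))) x := by
    have t1 := (Real.hasDerivAt_exp x).mul ((hasDerivAt_N _).comp x (hd1x x))
    have t2 := (Real.hasDerivAt_exp x).mul
      (((hasDerivAt_phi _).comp x (hd1x x)).const_mul (1 / (σ * rt)))
    have t3 := (((hasDerivAt_phi _).comp x (hd2x x)).const_mul (1 / (σ * rt))).const_mul (Real.exp k)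
    have h := (t1.add t2).sub t3
    simp only [Function.comp] at h
    have heq : (fun y => Real.exp y * N (d1 t T y k σ)
          + Real.exp y * (phi (d1 t T y k σ) * (1 / (σ * rt)))
          - Real.exp k * (phi (d2 t T y k σ) * (1 / (σ * rt))))
        = fun y => Real.exp y * N (d1 t T y k σ)
          + Real.exp y * (1 / (σ * rt) * phi (d1 t T y k σ))
          - Real.exp k * (1 / (σ * rt) * phi (d2 t T y k σ)) := by
      funext y; ring
    rw [heq]
    refine h.congr_deriv ?_
    ring
  have hiter : iteratedDeriv 2 (fun y => BS t T y k σ) x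
      = (Real.exp x * N (d1 t T x k σ)
          + Real.exp x * (phi (d1 t T x k σ) * (1 / (σ * rt))))
        + (Real.exp x * (phi (d1 t T x k σ) * (1 / (σ * rt)))
          + Real.exp x * ((-(d1 t T x k σ) * phi (d1 t T x k σ) * (1 / (σ * rt))) * (1 / (σ * rt))))
        - Real.exp k * ((-(d2 t T x k σ) * phi (d2 t T x k σ) * (1 / (σ * rt))) * (1 / (σ * rt))) := by
    rw [show (2:ℕ) = 1 + 1 from rfl, iteratedDeriv_succ, iteratedDeriv_one, hderiv1]
    exact hFx.deriv
  -- key identity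
  have key : Real.exp k * phi (d2 t T x k σ) = Real.exp x * phi (d1 t T x k σ) := by
    unfold phi
    rw [← mul_assoc, ← mul_assoc, mul_comm (Real.exp k), mul_comm (Real.exp x), mul_assoc,
      mul_assoc, ← Real.exp_add, ← Real.exp_add]
    congr 1
    rw [d1, d2, ← hrtdef]
    field_simp
    ring
  have hphi2 : phi (d2 t T x k σ) = Real.exp x * phi (d1 t T x k σ) / Real.exp k := by
    rw [← key]; field_simp
  have hd2eq : d2 t T x k σ = d1 t T x k σ - σ * rt := by
    rw [d1, d2, ← hrtdef]; ring
  rw [hBSt.deriv, hiter, (hBSx x).deriv, hphi2, hd2eq]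
  have hek := Real.exp_ne_zero k
  field_simp
  ring
end
end

section
/- For all real numbers t < T, x and all κ > 0, σ > 0, if the log-strike k satisfies the zero-vanna relation x − k = κ²(T−t)/2, then H(t,T,x,k,σ) := (∂³/∂x³ − ∂²/∂x²) BS(t,T,x,k,σ) = e^x φ(d1(t,T,x,k,σ)) · (σ² − κ²) / (2σ³√(T−t)). -/
noncomputable section

theorem bs_H_zero_vanna (t T x k κ σ : ℝ) (htT : t < T) (hκ : 0 < κ) (hσ : 0 < σ)
    (hk : x - k = κ ^ 2 * (T - t) / 2) :
    iteratedDeriv 3 (fun y => BS t T y k σ) x - iteratedDeriv 2 (fun y => BS t T y k σ) x =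
      Real.exp x * phi (d1 t T x k σ) * (σ ^ 2 - κ ^ 2) / (2 * σ ^ 3 * Real.sqrt (T - t)) := by
  set r : ℝ := Real.sqrt (T - t) with hr
  have hr0 : 0 < r := Real.sqrt_pos.mpr (by linarith)
  have hrsq : r ^ 2 = T - t := Real.sq_sqrt (by linarith)
  set s : ℝ := σ * r with hs
  have hs0 : 0 < s := mul_pos hσ hr0
  have hsne : s ≠ 0 := hs0.ne'
  -- derivative of d1, d2 in y
  have hd1 : ∀ y : ℝ, HasDerivAt (fun y => d1 t T y k σ) (1 / s) y := by
    intro y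
    have : HasDerivAt (fun y : ℝ => (y - k) / s + s / 2) (1 / s) y := by
      have := (((hasDerivAt_id y).sub_const k).div_const s).add_const (s / 2)
      simpa using this
    exact this
  have hd2 : ∀ y : ℝ, HasDerivAt (fun y => d2 t T y k σ) (1 / s) y := by
    intro y
    have : HasDerivAt (fun y : ℝ => (y - k) / s - s / 2) (1 / s) y := by
      have := (((hasDerivAt_id y).sub_const k).div_const s).sub_const (s / 2)
      simpa using this
    exact this
  -- key identity
  have hkey : ∀ y : ℝ, Real.exp y * phi (d1 t T y k σ) = Real.exp k * phi (d2 t T y k σ) := by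
    intro y
    unfold phi d1 d2
    rw [← mul_assoc, ← mul_assoc, mul_comm (Real.exp y), mul_comm (Real.exp k),
      mul_assoc, mul_assoc, ← Real.exp_add, ← Real.exp_add]
    congr 1
    rw [← hr, ← hs]
    field_simp
    ring
  -- first derivative
  have hD1 : ∀ y : ℝ, HasDerivAt (fun y => BS t T y k σ)
      (Real.exp y * N (d1 t T y k σ)) y := by
    intro y
    have h1 := (hasDerivAt_N (d1 t T y k σ)).comp y (hd1 y)
    have h2 := (hasDerivAt_N (d2 t T y k σ)).comp y (hd2 y)
    have h := ((Real.hasDerivAt_exp y).mul h1).sub (h2.const_mul (Real.exp k))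
    simp only [Function.comp_def] at h
    exact h.congr_deriv (by linear_combination (1 / s) * hkey y)
  -- second derivative
  have hD2 : ∀ y : ℝ, HasDerivAt (fun y => Real.exp y * N (d1 t T y k σ))
      (Real.exp y * N (d1 t T y k σ) + Real.exp y * phi (d1 t T y k σ) / s) y := by
    intro y
    have h1 := (hasDerivAt_N (d1 t T y k σ)).comp y (hd1 y)
    have h := (Real.hasDerivAt_exp y).mul h1
    simp only [Function.comp_def] at h
    exact h.congr_deriv (by ring)
  -- third derivative
  have hD3 : ∀ y : ℝ, HasDerivAt
      (fun y => Real.exp y * N (d1 t T y k σ) + Real.exp y * phi (d1 t T y k σ) / s)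
      (Real.exp y * N (d1 t T y k σ) + Real.exp y * phi (d1 t T y k σ) / s
        + (Real.exp y * phi (d1 t T y k σ) / s
          - Real.exp y * (d1 t T y k σ) * phi (d1 t T y k σ) / s ^ 2)) y := by
    intro y
    have hphi := (hasDerivAt_phi (d1 t T y k σ)).comp y (hd1 y)
    have hB := (((Real.hasDerivAt_exp y).mul hphi).div_const s)
    have h := (hD2 y).add hB
    simp only [Function.comp_def] at h
    exact h.congr_deriv (by field_simp; ring)
  -- compute iterated derivatives
  have e1 : deriv (fun y => BS t T y k σ) = fun y => Real.exp y * N (d1 t T y k σ) := by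
    funext y; exact (hD1 y).deriv
  have e2 : deriv (fun y => Real.exp y * N (d1 t T y k σ)) =
      fun y => Real.exp y * N (d1 t T y k σ) + Real.exp y * phi (d1 t T y k σ) / s := by
    funext y; exact (hD2 y).deriv
  rw [show (3 : ℕ) = 2 + 1 from rfl, iteratedDeriv_succ,
    show (2 : ℕ) = 1 + 1 from rfl, iteratedDeriv_succ, iteratedDeriv_one, e1, e2]
  beta_reduce
  rw [(hD3 x).deriv]
  have hd1x : d1 t T x k σ = r * (κ ^ 2 + σ ^ 2) / (2 * σ) := by
    unfold d1
    rw [← hr, ← hs, hk, ← hrsq]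
    field_simp
    ring
  rw [hd1x, hs]
  field_simp
  ring
end
end
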